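/- Weakening under a side literal set: let A be a set of clauses with A ⊢ ⊥ (resolution refutable), let d be a clause, and let B be a set of clauses such that every clause of the form c ∨ d with c ∈ A contains some clause of B as a subset (i.e., {c ∨ d | c ∈ A} ⊑ B). Then from B one can derive by resolution a clause that is a subset of d. -/

import Mathlib

/-! Resolution proof system: clauses are finite sets of literals, a literal is
a pair (variable, polarity). -/

variable {V : Type} [DecidableEq V]

/-- `C` is a resolvent of `C₁` and `C₂` (on some variable `x`). -/
def Resolvent (C₁ C₂ C : Finset (V × Bool)) : Prop :=
  ∃ x : V, (x, true) ∈ C₁ ∧ (x, false) ∈ C₂ ∧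
    C = C₁.erase (x, true) ∪ C₂.erase (x, false)

/-- A resolution derivation from the clause set `A`, newest clause first:
each listed clause is a resolvent of two clauses that are in `A` or occur later
in the list. -/
def IsDerivation (A : Set (Finset (V × Bool))) : List (Finset (V × Bool)) → Prop
  | [] => True
  | c :: rest => IsDerivation A rest ∧
      ∃ c₁ c₂, (c₁ ∈ A ∨ c₁ ∈ rest) ∧ (c₂ ∈ A ∨ c₂ ∈ rest) ∧ Resolvent c₁ c₂ c

/-- `Derives A n B` : every clause of `B` can be obtained from `A` by a single
resolution derivation adding at most `n` resolvents. -/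
def Derives (A : Set (Finset (V × Bool))) (n : ℕ) (B : Set (Finset (V × Bool))) : Prop :=
  ∃ L : List (Finset (V × Bool)), IsDerivation A L ∧ L.length ≤ n ∧
    B ⊆ A ∪ {c | c ∈ L}

/-- A Boolean assignment satisfies a clause if it makes some literal true. -/
def SatClause (φ : V → Bool) (C : Finset (V × Bool)) : Prop :=
  ∃ l ∈ C, φ l.1 = l.2

/-- An assignment satisfies a set of clauses if it satisfies each of them. -/
def SatSet (φ : V → Bool) (A : Set (Finset (V × Bool))) : Prop :=
  ∀ C ∈ A, SatClause φ C

lemma isDerivation_append {B : Set (Finset (V × Bool))}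
    {L₁ L₂ : List (Finset (V × Bool))}
    (h₁ : IsDerivation B L₁) (h₂ : IsDerivation B L₂) :
    IsDerivation B (L₁ ++ L₂) := by
  induction L₁ with
  | nil => simpa using h₂
  | cons c rest ih =>
    obtain ⟨hr, c₁, c₂, m₁, m₂, hres⟩ := h₁
    refine ⟨ih hr, c₁, c₂, ?_, ?_, hres⟩ <;>
      [cases m₁; cases m₂] <;> simp_all

/-- Weakly derivable: `c` is in `B` or appears in some derivation from `B`. -/
def WDer (B : Set (Finset (V × Bool))) (c : Finset (V × Bool)) : Prop :=
  ∃ L, IsDerivation B L ∧ (c ∈ B ∨ c ∈ L)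

lemma key {A B : Set (Finset (V × Bool))} {d : Finset (V × Bool)}
    (hB : ∀ c ∈ A, ∃ b ∈ B, b ⊆ c ∪ d) :
    ∀ L : List (Finset (V × Bool)), IsDerivation A L →
      ∀ c, (c ∈ A ∨ c ∈ L) → ∃ b, b ⊆ c ∪ d ∧ WDer B b := by
  intro L
  induction L with
  | nil =>
    rintro _ c (hc | hc)
    · obtain ⟨b, hbB, hbs⟩ := hB c hc
      exact ⟨b, hbs, [], trivial, Or.inl hbB⟩
    · simp at hc
  | cons c₀ rest ih =>
    rintro ⟨hr, c₁, c₂, m₁, m₂, x, hx₁, hx₂, hc₀⟩ c hc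
    rcases hc with hc | hc
    · exact ih hr c (Or.inl hc)
    rcases List.mem_cons.mp hc with rfl | hc
    swap
    · exact ih hr c (Or.inr hc)
    obtain ⟨b₁, hb₁s, L₁, hL₁, hm₁⟩ := ih hr c₁ m₁
    obtain ⟨b₂, hb₂s, L₂, hL₂, hm₂⟩ := ih hr c₂ m₂
    by_cases h₁ : (x, true) ∈ b₁
    · by_cases h₂ : (x, false) ∈ b₂
      · -- resolve b₁ and b₂ on x
        refine ⟨b₁.erase (x, true) ∪ b₂.erase (x, false), ?_, ?_⟩
        · intro y hy
          subst hc₀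
          simp only [Finset.mem_union, Finset.mem_erase] at hy ⊢
          rcases hy with ⟨hne, hy⟩ | ⟨hne, hy⟩
          · rcases Finset.mem_union.mp (hb₁s hy) with h | h
            · exact Or.inl (Or.inl ⟨hne, h⟩)
            · exact Or.inr h
          · rcases Finset.mem_union.mp (hb₂s hy) with h | h
            · exact Or.inl (Or.inr ⟨hne, h⟩)
            · exact Or.inr h
        · refine ⟨(b₁.erase (x, true) ∪ b₂.erase (x, false)) :: (L₁ ++ L₂),
            ⟨isDerivation_append hL₁ hL₂, b₁, b₂, ?_, ?_, x, h₁, h₂, rfl⟩,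
            Or.inr List.mem_cons_self⟩
          · rcases hm₁ with h | h
            · exact Or.inl h
            · exact Or.inr (List.mem_append.mpr (Or.inl h))
          · rcases hm₂ with h | h
            · exact Or.inl h
            · exact Or.inr (List.mem_append.mpr (Or.inr h))
      · refine ⟨b₂, ?_, L₂, hL₂, hm₂⟩
        intro y hy
        subst hc₀
        have hy' := hb₂s hy
        simp only [Finset.mem_union, Finset.mem_erase] at hy' ⊢
        rcases hy' with h | h
        · exact Or.inl (Or.inr ⟨fun he => h₂ (he ▸ hy), h⟩)
        · exact Or.inr h
    · refine ⟨b₁, ?_, L₁, hL₁, hm₁⟩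
      intro y hy
      subst hc₀
      have hy' := hb₁s hy
      simp only [Finset.mem_union, Finset.mem_erase] at hy' ⊢
      rcases hy' with h | h
      · exact Or.inl (Or.inl ⟨fun he => h₁ (he ▸ hy), h⟩)
      · exact Or.inr h

/-- Weakening under a side literal set: if `A` is resolution-refutable and
every clause `c ∪ d` with `c ∈ A` contains some clause of `B`, then from `B`
one can derive some subclause of `d`. -/
theorem stmt19 {V : Type} [DecidableEq V]
    (A B : Set (Finset (V × Bool))) (d : Finset (V × Bool))
    (hA : ∃ n, Derives A n {(∅ : Finset (V × Bool))})
    (hB : ∀ c ∈ A, ∃ b ∈ B, b ⊆ c ∪ d) :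
    ∃ d' ⊆ d, ∃ n, Derives B n {d'} := by
  obtain ⟨n, L, hL, _, hsub⟩ := hA
  have h0 : (∅ : Finset (V × Bool)) ∈ A ∨ (∅ : Finset (V × Bool)) ∈ L := by
    simpa using hsub rfl
  obtain ⟨b, hbs, L', hL', hm⟩ := key hB L hL ∅ h0
  refine ⟨b, by simpa using hbs, L'.length, L', hL', le_refl _, ?_⟩
  intro y hy
  rcases hm with h | h <;> simp_all
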